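/- Let χ₁ be a primitive Dirichlet character modulo q₁, let q be a multiple of q₁, and let χ be the Dirichlet character modulo q induced by χ₁. Then for every integer m with gcd(m, q) = 1, ∑_{r=0}^{q−1} χ(r) e^{2πi m r / q} = conj(χ(m)) · χ₁(q/q₁) · μ(q/q₁) · τ(χ₁), where μ is the Möbius function and τ(χ₁) = ∑_{n=1}^{q₁} χ₁(n) e^{2πi n / q₁} is the Gauss sum of χ₁. -/

import Mathlib

open Finset Complex Real

namespace Stmt15Aux

lemma sum_zmod {q : ℕ} [NeZero q] (g : ZMod q → ℂ) :
    ∑ x : ZMod q, g x = ∑ r ∈ Finset.range q, g (r : ZMod q) := by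
  refine Finset.sum_nbij' (fun x => x.val) (fun r => (r : ZMod q)) ?_ ?_ ?_ ?_ ?_
  · intro a _; exact Finset.mem_range.mpr (ZMod.val_lt a)
  · intro a _; exact Finset.mem_univ _
  · intro a _; exact ZMod.natCast_zmod_val a
  · intro a ha; exact ZMod.val_cast_of_lt (Finset.mem_range.mp ha)
  · intro a _; rw [ZMod.natCast_zmod_val]

lemma stdAddChar_natCast (q : ℕ) [NeZero q] (r : ℕ) :
    ZMod.stdAddChar ((r : ℕ) : ZMod q) = Complex.exp (2 * (π : ℂ) * Complex.I * r / q) := by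
  simpa using ZMod.stdAddChar_coe (N := q) (r : ℤ)

lemma moebius_sum (n : ℕ) (hn : n ≠ 0) :
    ∑ k ∈ n.divisors, ((ArithmeticFunction.moebius k : ℤ) : ℂ) = if n = 1 then 1 else 0 := by
  have h := congrArg (fun f : ArithmeticFunction ℂ => f n)
    (ArithmeticFunction.coe_moebius_mul_coe_zeta (R := ℂ))
  simp only [ArithmeticFunction.mul_apply, ArithmeticFunction.one_apply,
    ArithmeticFunction.intCoe_apply, ArithmeticFunction.natCoe_apply] at h
  rw [Nat.sum_divisorsAntidiagonal
    (fun a b => ((ArithmeticFunction.moebius a : ℤ) : ℂ) * ((ArithmeticFunction.zeta b : ℕ) : ℂ))] at h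
  rw [← h]
  refine Finset.sum_congr rfl fun k hk => ?_
  have h1 : n / k ≠ 0 := Nat.div_ne_zero_iff_of_dvd (Nat.mem_divisors.mp hk).1 |>.mpr ⟨hn, ?_⟩
  · simp [ArithmeticFunction.natCoe_apply, ArithmeticFunction.zeta_apply, h1,
      ArithmeticFunction.intCoe_apply]
  · rintro rfl; simp at hk

lemma coprime_indicator (d : ℕ) (hd : d ≠ 0) (r : ℕ) :
    (if Nat.Coprime r d then (1 : ℂ) else 0)
      = ∑ k ∈ d.divisors, (if k ∣ r then ((ArithmeticFunction.moebius k : ℤ) : ℂ) else 0) := by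
  rw [← Finset.sum_filter]
  have hset : d.divisors.filter (· ∣ r) = (Nat.gcd r d).divisors := by
    ext k
    simp only [Finset.mem_filter, Nat.mem_divisors, Nat.dvd_gcd_iff]
    constructor
    · rintro ⟨⟨h1, h2⟩, h3⟩; exact ⟨⟨h3, h1⟩, fun h => hd (Nat.eq_zero_of_gcd_eq_zero_right h)⟩
    · rintro ⟨⟨h1, h2⟩, h3⟩; exact ⟨⟨h2, hd⟩, h1⟩
  rw [hset, moebius_sum _ (fun h => hd (Nat.eq_zero_of_gcd_eq_zero_right h))]

lemma div_reindex (q k : ℕ) (hk : k ∣ q) (hk0 : k ≠ 0) (f : ℕ → ℂ) :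
    ∑ r ∈ Finset.range q, (if k ∣ r then f r else 0) = ∑ s ∈ Finset.range (q / k), f (k * s) := by
  rw [← Finset.sum_filter]
  refine Finset.sum_nbij' (fun r => r / k) (fun s => k * s) ?_ ?_ ?_ ?_ ?_
  · intro r hr
    rw [Finset.mem_filter, Finset.mem_range] at hr
    exact Finset.mem_range.mpr (Nat.div_lt_div_of_lt_of_dvd hk hr.1)
  · intro s hs
    rw [Finset.mem_range] at hs
    exact Finset.mem_filter.mpr ⟨Finset.mem_range.mpr ((Nat.lt_div_iff_mul_lt' hk s).mp hs),
      Dvd.intro s rfl⟩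
  · intro r hr
    exact Nat.mul_div_cancel' (Finset.mem_filter.mp hr).2
  · intro s _
    exact Nat.mul_div_cancel_left s (Nat.pos_of_ne_zero hk0)
  · intro r hr
    rw [Nat.mul_div_cancel' (Finset.mem_filter.mp hr).2]

lemma exp_sum_zero (t : ℕ) (ht : 2 ≤ t) :
    ∑ j ∈ Finset.range t, Complex.exp (2 * (π : ℂ) * Complex.I * j / t) = 0 := by
  have ht0 : (t : ℂ) ≠ 0 := Nat.cast_ne_zero.mpr (by omega)
  have hxj : ∀ j : ℕ, Complex.exp (2 * (π : ℂ) * Complex.I * j / t)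
      = Complex.exp (2 * (π : ℂ) * Complex.I / t) ^ j := by
    intro j
    rw [← Complex.exp_nat_mul]
    ring_nf
  have hxt : Complex.exp (2 * (π : ℂ) * Complex.I / t) ^ t = 1 := by
    rw [← Complex.exp_nat_mul, mul_div_cancel₀ _ ht0]
    simpa using Complex.exp_int_mul_two_pi_mul_I 1
  have hx1 : Complex.exp (2 * (π : ℂ) * Complex.I / t) ≠ 1 := by
    intro h
    rw [Complex.exp_eq_one_iff] at h
    obtain ⟨n, hn⟩ := h
    have h2 : (2 * (π : ℂ) * Complex.I) ≠ 0 := by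
      simp [Real.pi_ne_zero, Complex.I_ne_zero, Complex.ofReal_ne_zero]
    have e2 : (2 * (π : ℂ) * Complex.I) * ((t : ℂ)⁻¹ - n) = 0 := by
      linear_combination hn
    have e3 : ((t : ℂ)⁻¹ - n) = 0 := by
      rcases mul_eq_zero.mp e2 with h' | h'
      · exact absurd h' h2
      · exact h'
    have e4 : (n : ℂ) * t = 1 := by
      have : (t : ℂ)⁻¹ = n := sub_eq_zero.mp e3
      rw [← this, inv_mul_cancel₀ ht0]
    have h3 : (n * t : ℤ) = 1 := by exact_mod_cast e4
    have h4 : (t : ℤ) ≤ 1 := Int.le_of_dvd (by norm_num) ⟨n, by rw [← h3]; ring⟩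
    omega
  simp_rw [hxj]
  rw [geom_sum_eq hx1, hxt]
  simp

lemma T_vanish (q₁ t : ℕ) (hq₁ : q₁ ≠ 0) (ht : 2 ≤ t) (χ₁ : DirichletCharacter ℂ q₁) :
    ∑ s ∈ Finset.range (q₁ * t),
        χ₁ ((s : ℕ) : ZMod q₁) * Complex.exp (2 * (π : ℂ) * Complex.I * s / ((q₁ * t : ℕ) : ℂ))
      = 0 := by
  have hq₁' : 0 < q₁ := Nat.pos_of_ne_zero hq₁
  have hq₁0 : (q₁ : ℂ) ≠ 0 := Nat.cast_ne_zero.mpr hq₁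
  have ht0 : (t : ℂ) ≠ 0 := Nat.cast_ne_zero.mpr (by omega)
  have step : ∑ s ∈ Finset.range (q₁ * t),
        χ₁ ((s : ℕ) : ZMod q₁) * Complex.exp (2 * (π : ℂ) * Complex.I * s / ((q₁ * t : ℕ) : ℂ))
      = ∑ p ∈ Finset.range t ×ˢ Finset.range q₁,
          χ₁ ((p.2 : ℕ) : ZMod q₁) *
            Complex.exp (2 * (π : ℂ) * Complex.I * ((q₁ * p.1 + p.2 : ℕ) : ℂ) / ((q₁ * t : ℕ) : ℂ)) := by
    refine Finset.sum_nbij' (fun s => (s / q₁, s % q₁)) (fun p => q₁ * p.1 + p.2) ?_ ?_ ?_ ?_ ?_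
    · intro s hs
      rw [Finset.mem_range] at hs
      refine Finset.mem_product.mpr ⟨Finset.mem_range.mpr ?_, Finset.mem_range.mpr (Nat.mod_lt _ hq₁')⟩
      rw [Nat.div_lt_iff_lt_mul hq₁']
      rwa [Nat.mul_comm q₁ t] at hs
    · intro p hp
      rw [Finset.mem_product, Finset.mem_range, Finset.mem_range] at hp
      refine Finset.mem_range.mpr ?_
      calc q₁ * p.1 + p.2 < q₁ * p.1 + q₁ := by omega
      _ = q₁ * (p.1 + 1) := by ring
      _ ≤ q₁ * t := Nat.mul_le_mul_left _ (by omega)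
    · intro s _
      exact Nat.div_add_mod s q₁
    · intro p hp
      rw [Finset.mem_product, Finset.mem_range, Finset.mem_range] at hp
      refine Prod.ext ?_ ?_
      · show (q₁ * p.1 + p.2) / q₁ = p.1
        rw [Nat.mul_add_div hq₁', Nat.div_eq_of_lt hp.2, Nat.add_zero]
      · show (q₁ * p.1 + p.2) % q₁ = p.2
        rw [Nat.mul_add_mod, Nat.mod_eq_of_lt hp.2]
    · intro s _
      have h1 : q₁ * (s / q₁) + s % q₁ = s := Nat.div_add_mod s q₁
      rw [h1]
      congr 2
      conv_lhs => rw [← h1]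
      push_cast [Nat.cast_add, Nat.cast_mul]
      rw [ZMod.natCast_self]
      ring_nf
  rw [step, Finset.sum_product]
  have key : ∀ j ∈ Finset.range t, ∀ a ∈ Finset.range q₁,
      χ₁ ((a : ℕ) : ZMod q₁) *
          Complex.exp (2 * (π : ℂ) * Complex.I * ((q₁ * j + a : ℕ) : ℂ) / ((q₁ * t : ℕ) : ℂ))
        = (χ₁ ((a : ℕ) : ZMod q₁) *
            Complex.exp (2 * (π : ℂ) * Complex.I * a / ((q₁ * t : ℕ) : ℂ))) *
            Complex.exp (2 * (π : ℂ) * Complex.I * j / t) := by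
    intro j _ a _
    rw [show (2 * (π : ℂ) * Complex.I * ((q₁ * j + a : ℕ) : ℂ) / ((q₁ * t : ℕ) : ℂ))
        = (2 * (π : ℂ) * Complex.I * a / ((q₁ * t : ℕ) : ℂ)) + (2 * (π : ℂ) * Complex.I * j / (t : ℂ))
      from by push_cast; field_simp; ring, Complex.exp_add]
    ring
  calc ∑ j ∈ Finset.range t, ∑ a ∈ Finset.range q₁,
        χ₁ ((a : ℕ) : ZMod q₁) *
          Complex.exp (2 * (π : ℂ) * Complex.I * ((q₁ * j + a : ℕ) : ℂ) / ((q₁ * t : ℕ) : ℂ))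
      = ∑ j ∈ Finset.range t,
          (∑ a ∈ Finset.range q₁, χ₁ ((a : ℕ) : ZMod q₁) *
            Complex.exp (2 * (π : ℂ) * Complex.I * a / ((q₁ * t : ℕ) : ℂ))) *
            Complex.exp (2 * (π : ℂ) * Complex.I * j / t) := by
        refine Finset.sum_congr rfl fun j hj => ?_
        rw [Finset.sum_mul]
        exact Finset.sum_congr rfl fun a ha => key j hj a ha
  _ = 0 := by
        rw [← Finset.mul_sum, exp_sum_zero t ht, mul_zero]

lemma tau_range (q₁ : ℕ) (hq₁ : q₁ ≠ 0) (χ₁ : DirichletCharacter ℂ q₁) :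
    ∑ n ∈ Finset.Icc 1 q₁,
        χ₁ ((n : ℕ) : ZMod q₁) * Complex.exp (2 * (π : ℂ) * Complex.I * (n : ℂ) / (q₁ : ℂ))
      = ∑ a ∈ Finset.range q₁,
        χ₁ ((a : ℕ) : ZMod q₁) * Complex.exp (2 * (π : ℂ) * Complex.I * (a : ℂ) / (q₁ : ℂ)) := by
  set f : ℕ → ℂ := fun n =>
    χ₁ ((n : ℕ) : ZMod q₁) * Complex.exp (2 * (π : ℂ) * Complex.I * (n : ℂ) / (q₁ : ℂ)) with hf
  have hq₁0 : (q₁ : ℂ) ≠ 0 := Nat.cast_ne_zero.mpr hq₁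
  have hfq : f q₁ = f 0 := by
    simp only [hf, ZMod.natCast_self, Nat.cast_zero, mul_zero, zero_div, Complex.exp_zero]
    rw [mul_div_cancel_right₀ _ hq₁0, Complex.exp_two_pi_mul_I]
  have hIcc : Finset.Icc 1 q₁ = Finset.Ico 1 (q₁ + 1) := (Finset.Ico_add_one_right_eq_Icc 1 q₁).symm
  rw [hIcc, Finset.sum_Ico_eq_sum_range]
  simp only [Nat.add_sub_cancel]
  calc ∑ i ∈ Finset.range q₁, f (1 + i) = ∑ i ∈ Finset.range q₁, f (i + 1) := by
        exact Finset.sum_congr rfl fun i _ => by rw [Nat.add_comm]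
  _ = (∑ i ∈ Finset.range (q₁ + 1), f i) - f 0 := by rw [Finset.sum_range_succ' f q₁]; ring
  _ = (∑ i ∈ Finset.range q₁, f i) + f q₁ - f 0 := by rw [Finset.sum_range_succ]
  _ = ∑ i ∈ Finset.range q₁, f i := by rw [hfq]; ring

end Stmt15Aux

theorem stmt15 (q₁ q : ℕ) (hq₁ : 0 < q₁) (hq : 0 < q) (hdvd : q₁ ∣ q)
    (χ₁ : DirichletCharacter ℂ q₁) (hprim : χ₁.IsPrimitive)
    (χ : DirichletCharacter ℂ q) (hχ : χ = DirichletCharacter.changeLevel hdvd χ₁)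
    (τ : ℂ)
    (hτ : τ = ∑ n ∈ Finset.Icc 1 q₁,
      χ₁ ((n : ℕ) : ZMod q₁) * Complex.exp (2 * (Real.pi : ℂ) * Complex.I * (n : ℂ) / (q₁ : ℂ)))
    (m : ℤ) (hm : IsCoprime m (q : ℤ)) :
    ∑ r ∈ Finset.range q,
        χ ((r : ℕ) : ZMod q) * Complex.exp (2 * (Real.pi : ℂ) * Complex.I * (m : ℂ) * (r : ℂ) / (q : ℂ))
      = (starRingEnd ℂ) (χ ((m : ℤ) : ZMod q)) * χ₁ (((q / q₁ : ℕ)) : ZMod q₁) *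
          ((ArithmeticFunction.moebius (q / q₁) : ℤ) : ℂ) * τ := by
  haveI : NeZero q := ⟨hq.ne'⟩
  haveI : NeZero q₁ := ⟨hq₁.ne'⟩
  have hqd : q = q₁ * (q / q₁) := (Nat.mul_div_cancel' hdvd).symm
  have hd0 : q / q₁ ≠ 0 := by
    intro h
    rw [h, Nat.mul_zero] at hqd
    omega
  have hddvd : (q / q₁) ∣ q := Nat.div_dvd_of_dvd hdvd
  -- χ on naturals
  have hχnat : ∀ r : ℕ, χ ((r : ℕ) : ZMod q)
      = if Nat.Coprime r q then χ₁ ((r : ℕ) : ZMod q₁) else 0 := by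
    intro r
    by_cases h : Nat.Coprime r q
    · have hu : IsUnit ((r : ℕ) : ZMod q) := (ZMod.isUnit_iff_coprime r q).mpr h
      rw [if_pos h, hχ]
      have h2 := DirichletCharacter.changeLevel_eq_cast_of_dvd χ₁ hdvd hu.unit
      rw [IsUnit.unit_spec] at h2
      rw [h2, ZMod.cast_natCast hdvd]
    · rw [if_neg h, hχ]
      exact (DirichletCharacter.changeLevel hdvd χ₁).map_nonunit
        (fun hu => h ((ZMod.isUnit_iff_coprime r q).mp hu))
  -- m is a unit mod q
  have hu : IsUnit ((m : ℤ) : ZMod q) := by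
    have h1 := hm.map (Int.castRingHom (ZMod q))
    simp only [Int.coe_castRingHom, Int.cast_natCast, ZMod.natCast_self] at h1
    exact isCoprime_zero_right.mp h1
  -- Step A
  have hLHS : ∑ r ∈ Finset.range q,
        χ ((r : ℕ) : ZMod q) * Complex.exp (2 * (π : ℂ) * Complex.I * (m : ℂ) * (r : ℂ) / (q : ℂ))
      = gaussSum χ (ZMod.stdAddChar.mulShift ((m : ℤ) : ZMod q)) := by
    rw [show gaussSum χ (ZMod.stdAddChar.mulShift ((m : ℤ) : ZMod q))
        = ∑ x : ZMod q, χ x * (ZMod.stdAddChar.mulShift ((m : ℤ) : ZMod q)) x from rfl,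
      Stmt15Aux.sum_zmod]
    refine Finset.sum_congr rfl fun r _ => ?_
    congr 1
    rw [AddChar.mulShift_apply]
    rw [show ((m : ℤ) : ZMod q) * ((r : ℕ) : ZMod q) = (((m * (r : ℕ) : ℤ)) : ZMod q) from by
      push_cast; ring]
    rw [ZMod.stdAddChar_coe]
    congr 1
    push_cast
    ring
  -- Step B
  have hB : gaussSum χ (ZMod.stdAddChar.mulShift ((m : ℤ) : ZMod q))
      = (starRingEnd ℂ) (χ ((m : ℤ) : ZMod q)) * gaussSum χ ZMod.stdAddChar := by
    have h1 := gaussSum_mulShift χ ZMod.stdAddChar hu.unit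
    rw [IsUnit.unit_spec] at h1
    have hnorm : ‖χ ((m : ℤ) : ZMod q)‖ = 1 := by
      have h2 := χ.unit_norm_eq_one hu.unit
      rwa [IsUnit.unit_spec] at h2
    have hne : χ ((m : ℤ) : ZMod q) ≠ 0 := fun h => by simp [h] at hnorm
    rw [← Complex.inv_eq_conj hnorm]
    exact (eq_inv_mul_iff_mul_eq₀ hne).mpr h1
  -- tau over range
  have hτ' : τ = ∑ a ∈ Finset.range q₁,
      χ₁ ((a : ℕ) : ZMod q₁) * Complex.exp (2 * (π : ℂ) * Complex.I * (a : ℂ) / (q₁ : ℂ)) := by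
    rw [hτ]
    exact Stmt15Aux.tau_range q₁ hq₁.ne' χ₁
  -- Step C
  have hC : gaussSum χ ZMod.stdAddChar
      = χ₁ (((q / q₁ : ℕ)) : ZMod q₁) * ((ArithmeticFunction.moebius (q / q₁) : ℤ) : ℂ) * τ := by
    rw [show gaussSum χ ZMod.stdAddChar = ∑ x : ZMod q, χ x * ZMod.stdAddChar x from rfl, Stmt15Aux.sum_zmod]
    have e1 : ∀ r : ℕ, χ ((r : ℕ) : ZMod q) * ZMod.stdAddChar ((r : ℕ) : ZMod q)
        = ∑ k ∈ (q / q₁).divisors, (if k ∣ r then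
            ((ArithmeticFunction.moebius k : ℤ) : ℂ) *
              (χ₁ ((r : ℕ) : ZMod q₁) * Complex.exp (2 * (π : ℂ) * Complex.I * r / (q : ℂ)))
          else 0) := by
      intro r
      rw [Stmt15Aux.stdAddChar_natCast q r, hχnat r]
      have e2 : (if Nat.Coprime r q then χ₁ ((r : ℕ) : ZMod q₁) else 0)
          = χ₁ ((r : ℕ) : ZMod q₁) * (if Nat.Coprime r (q / q₁) then (1 : ℂ) else 0) := by
        by_cases h1 : Nat.Coprime r q₁
        · have hiff : Nat.Coprime r q ↔ Nat.Coprime r (q / q₁) := by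
            conv_lhs => rw [hqd]
            rw [Nat.coprime_mul_iff_right]
            exact and_iff_right h1
          by_cases h2 : Nat.Coprime r (q / q₁)
          · rw [if_pos (hiff.mpr h2), if_pos h2, mul_one]
          · rw [if_neg (fun h => h2 (hiff.mp h)), if_neg h2, mul_zero]
        · have hz : χ₁ ((r : ℕ) : ZMod q₁) = 0 := χ₁.map_nonunit
            (fun hu' => h1 ((ZMod.isUnit_iff_coprime r q₁).mp hu'))
          have hnc : ¬ Nat.Coprime r q := fun h => h1 (Nat.Coprime.coprime_dvd_right hdvd h)
          rw [if_neg hnc, hz, zero_mul]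
      rw [e2, Stmt15Aux.coprime_indicator (q / q₁) hd0 r, Finset.mul_sum, Finset.sum_mul]
      refine Finset.sum_congr rfl fun k _ => ?_
      split_ifs <;> ring
    calc ∑ r ∈ Finset.range q, χ ((r : ℕ) : ZMod q) * ZMod.stdAddChar ((r : ℕ) : ZMod q)
        = ∑ r ∈ Finset.range q, ∑ k ∈ (q / q₁).divisors, (if k ∣ r then
            ((ArithmeticFunction.moebius k : ℤ) : ℂ) *
              (χ₁ ((r : ℕ) : ZMod q₁) * Complex.exp (2 * (π : ℂ) * Complex.I * r / (q : ℂ)))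
          else 0) := Finset.sum_congr rfl fun r _ => e1 r
      _ = ∑ k ∈ (q / q₁).divisors, ∑ r ∈ Finset.range q, (if k ∣ r then
            ((ArithmeticFunction.moebius k : ℤ) : ℂ) *
              (χ₁ ((r : ℕ) : ZMod q₁) * Complex.exp (2 * (π : ℂ) * Complex.I * r / (q : ℂ)))
          else 0) := Finset.sum_comm
      _ = ∑ k ∈ (q / q₁).divisors, (if k = q / q₁ then
            χ₁ (((q / q₁ : ℕ)) : ZMod q₁) * ((ArithmeticFunction.moebius (q / q₁) : ℤ) : ℂ) * τ
          else 0) := by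
          refine Finset.sum_congr rfl fun k hk => ?_
          obtain ⟨hkd, -⟩ := Nat.mem_divisors.mp hk
          have hk0 : k ≠ 0 := by
            rintro rfl
            exact hd0 (Nat.eq_zero_of_zero_dvd hkd)
          have hkq : k ∣ q := hkd.trans hddvd
          rw [Stmt15Aux.div_reindex q k hkq hk0]
          have hqk : q / k = q₁ * (q / q₁ / k) := by
            conv_lhs => rw [hqd]
            exact Nat.mul_div_assoc q₁ hkd
          have hqk0 : q / k ≠ 0 := (Nat.div_ne_zero_iff_of_dvd hkq).mpr ⟨hq.ne', hk0⟩
          have hterm : ∀ s : ℕ,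
              ((ArithmeticFunction.moebius k : ℤ) : ℂ) *
                (χ₁ ((k * s : ℕ) : ZMod q₁) *
                  Complex.exp (2 * (π : ℂ) * Complex.I * ((k * s : ℕ) : ℂ) / (q : ℂ)))
              = ((ArithmeticFunction.moebius k : ℤ) : ℂ) * χ₁ ((k : ℕ) : ZMod q₁) *
                (χ₁ ((s : ℕ) : ZMod q₁) *
                  Complex.exp (2 * (π : ℂ) * Complex.I * (s : ℂ) / ((q / k : ℕ) : ℂ))) := by
            intro s
            have hq' : (q : ℂ) = (k : ℂ) * ((q / k : ℕ) : ℂ) := by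
              exact_mod_cast congrArg (Nat.cast : ℕ → ℂ) (Nat.mul_div_cancel' hkq).symm
            have hk0' : (k : ℂ) ≠ 0 := Nat.cast_ne_zero.mpr hk0
            have hqk0' : ((q / k : ℕ) : ℂ) ≠ 0 := Nat.cast_ne_zero.mpr hqk0
            have hexp : 2 * (π : ℂ) * Complex.I * ((k * s : ℕ) : ℂ) / (q : ℂ)
                = 2 * (π : ℂ) * Complex.I * (s : ℂ) / ((q / k : ℕ) : ℂ) := by
              rw [hq']
              push_cast
              field_simp
            rw [hexp]
            push_cast [Nat.cast_mul]
            rw [map_mul]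
            ring
          by_cases hkd' : k = q / q₁
          · rw [if_pos hkd', hτ']
            simp_rw [hterm]
            rw [← Finset.mul_sum, hkd', Nat.div_div_self hdvd hq.ne']
            ring
          · rw [if_neg hkd']
            have ht2 : 2 ≤ q / q₁ / k := by
              have h1 : q / q₁ / k ≠ 0 := (Nat.div_ne_zero_iff_of_dvd hkd).mpr ⟨hd0, hk0⟩
              have h2 : q / q₁ / k ≠ 1 := by
                intro h
                apply hkd'
                have h3 := Nat.mul_div_cancel' hkd
                rw [h, Nat.mul_one] at h3
                exact h3
              generalize q / q₁ / k = n at h1 h2 ⊢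
              omega
            simp_rw [hterm]
            rw [← Finset.mul_sum, hqk, Stmt15Aux.T_vanish q₁ (q / q₁ / k) hq₁.ne' ht2 χ₁, mul_zero]
      _ = χ₁ (((q / q₁ : ℕ)) : ZMod q₁) * ((ArithmeticFunction.moebius (q / q₁) : ℤ) : ℂ) * τ := by
          rw [Finset.sum_ite_eq' (q / q₁).divisors (q / q₁)
            (fun _ => χ₁ (((q / q₁ : ℕ)) : ZMod q₁) *
              ((ArithmeticFunction.moebius (q / q₁) : ℤ) : ℂ) * τ)]
          rw [if_pos (Nat.mem_divisors_self _ hd0)]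
  rw [hLHS, hB, hC]
  ring
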